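/- Let Ξ_C be the dephasing supermap sending a channel E to the channel with Jamiołkowski matrix J(E) ∘ C, where C is a d²×d² correlation matrix with all diagonal d×d blocks equal. Then for any Schur-product channel D_{C'}, one has Ξ_C[D_{C'}] = D_{C'∘C̃}, where C̃_{ij} := C_{ii,jj}; moreover C̃ is a correlation matrix. -/

import Mathlib

open Matrix
open scoped Kronecker ComplexOrder

noncomputable section

/-- The Schur-product (Hadamard-product) superoperator `X ↦ X ∘ C`. -/
def schurMap {d : ℕ} (C : Matrix (Fin d) (Fin d) ℂ) :
    Matrix (Fin d) (Fin d) ℂ →ₗ[ℂ] Matrix (Fin d) (Fin d) ℂ where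
  toFun X := X.hadamard C
  map_add' X Y := by ext i j; simp [Matrix.hadamard]; ring
  map_smul' c X := by ext i j; simp [Matrix.hadamard]; ring

/-- The extension `E ⊗ I_n` of a superoperator, applied to a bipartite matrix. -/
def tensExt {d : ℕ} (E : Matrix (Fin d) (Fin d) ℂ →ₗ[ℂ] Matrix (Fin d) (Fin d) ℂ) (n : ℕ)
    (ρ : Matrix (Fin d × Fin n) (Fin d × Fin n) ℂ) :
    Matrix (Fin d × Fin n) (Fin d × Fin n) ℂ :=
  Matrix.of fun p q => ∑ i, ∑ j, (E (Matrix.single i j 1)) p.1 q.1 * ρ (i, p.2) (j, q.2)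

/-- Complete positivity: every extension `E ⊗ I_n` preserves positive semidefiniteness. -/
def IsCP {d : ℕ} (E : Matrix (Fin d) (Fin d) ℂ →ₗ[ℂ] Matrix (Fin d) (Fin d) ℂ) : Prop :=
  ∀ (n : ℕ) (ρ : Matrix (Fin d × Fin n) (Fin d × Fin n) ℂ),
    ρ.PosSemidef → (tensExt E n ρ).PosSemidef

/-- Trace preservation. -/
def IsTP {d : ℕ} (E : Matrix (Fin d) (Fin d) ℂ →ₗ[ℂ] Matrix (Fin d) (Fin d) ℂ) : Prop :=
  ∀ X, (E X).trace = X.trace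

/-- Quantum channel: completely positive and trace-preserving. -/
def IsCPTP {d : ℕ} (E : Matrix (Fin d) (Fin d) ℂ →ₗ[ℂ] Matrix (Fin d) (Fin d) ℂ) : Prop :=
  IsCP E ∧ IsTP E

/-- The Jamiołkowski matrix `J(E) = (E ⊗ I)(|Ψ⟩⟨Ψ|)`, with entries
`J(E)_{(i,k),(j,l)} = E(|k⟩⟨l|)_{i j} / d`. -/
def jam {d : ℕ} (E : Matrix (Fin d) (Fin d) ℂ →ₗ[ℂ] Matrix (Fin d) (Fin d) ℂ) :
    Matrix (Fin d × Fin d) (Fin d × Fin d) ℂ :=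
  Matrix.of fun p q => (E (Matrix.single p.2 q.2 1)) p.1 q.1 / d

/-- Controlled unitary `U = Σ_i |i⟩⟨i| ⊗ U_i`. -/
def ctrl {d n : ℕ} (Us : Fin d → Matrix (Fin n) (Fin n) ℂ) :
    Matrix (Fin d × Fin n) (Fin d × Fin n) ℂ :=
  Matrix.of fun p q => (if p.1 = q.1 then (1 : ℂ) else 0) * (Us p.1) p.2 q.2


/-- a dephasing superchannel `Ξ_C` (acting as `J(E) ↦ J(E) ∘ C`) maps
a Schur-product channel `D_{C'}` to `D_{C' ∘ C̃}` with `C̃_ij = C_{ii,jj}`, which is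
again a correlation matrix. -/
theorem stmt15 (d : ℕ) (C : Matrix (Fin d × Fin d) (Fin d × Fin d) ℂ)
    (hC : C.PosSemidef) (hCdiag : ∀ p, C p p = 1)
    (hblocks : ∀ i i' k l, C (i, k) (i, l) = C (i', k) (i', l))
    (C' : Matrix (Fin d) (Fin d) ℂ) (hC' : C'.PosSemidef) (hC'diag : ∀ i, C' i i = 1) :
    (jam (schurMap C')).hadamard C =
      jam (schurMap (C'.hadamard (Matrix.of fun i j => C (i, i) (j, j)))) ∧
    (Matrix.of fun i j => C (i, i) (j, j) : Matrix (Fin d) (Fin d) ℂ).PosSemidef ∧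
    (∀ i, (Matrix.of fun i j => C (i, i) (j, j) : Matrix (Fin d) (Fin d) ℂ) i i = 1) := by
  refine ⟨?_, ?_, fun i => hCdiag (i, i)⟩
  · ext ⟨i, k⟩ ⟨j, l⟩
    simp only [Matrix.hadamard, jam, schurMap, Matrix.of_apply, LinearMap.coe_mk,
      AddHom.coe_mk, Matrix.single]
    by_cases hik : k = i <;> by_cases hjl : l = j <;>
      simp [hik, hjl, div_mul_eq_mul_div]
  · have := hC.submatrix (fun i : Fin d => (i, i))
    convert this using 2
    rfl

end
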